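/- arXiv:1810.08505 — 4 statements merged into one kernel-verified Lean document; each statement's English description precedes it below -/
import Mathlib

section
/- (Cauchy–Schwarz inequality for determinants) Let ℓ ≤ m and let A, B be m×ℓ real matrices. Then (det(Aᵀ B))² ≤ det(Aᵀ A) · det(Bᵀ B). -/
open Matrix

variable {n : Type*} [Fintype n] [DecidableEq n]

lemma psd_det_nonneg {M : Matrix n n ℝ} (h : M.PosSemidef) : 0 ≤ M.det := by
  rw [h.isHermitian.det_eq_prod_eigenvalues]
  exact Finset.prod_nonneg fun i _ => h.eigenvalues_nonneg i

lemma one_le_det_one_add {Z : Matrix n n ℝ} (h : Z.PosSemidef) : 1 ≤ (1 + Z).det := by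
  have hH := h.isHermitian
  have hspec := hH.spectral_theorem
  set U : Matrix n n ℝ := (hH.eigenvectorUnitary : Matrix n n ℝ) with hU
  have hUU : U * star U = 1 := Matrix.mem_unitaryGroup_iff.mp hH.eigenvectorUnitary.2
  set d : n → ℝ := RCLike.ofReal ∘ hH.eigenvalues with hd
  have key : (1 : Matrix n n ℝ) + Z = U * (1 + diagonal d) * star U := by
    rw [Matrix.mul_add, Matrix.add_mul, Matrix.mul_one, hUU, hspec, Unitary.conjStarAlgAut_apply]
  have hdet : U.det * (star U).det = 1 := by rw [← det_mul, hUU, det_one]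
  have hD : 1 ≤ (1 + diagonal d).det := by
    rw [← Matrix.diagonal_one, diagonal_add, det_diagonal]
    calc (1:ℝ) = ∏ _i : n, 1 := by simp
      _ ≤ ∏ i, (1 + d) i := by
        refine Finset.prod_le_prod (fun i _ => zero_le_one) (fun i _ => ?_)
        have hdi : 0 ≤ d i := by simpa [hd] using h.eigenvalues_nonneg i
        simp only [Pi.add_apply, Pi.one_apply]
        linarith
  calc (1 : ℝ) ≤ (1 + diagonal d).det := hD
    _ = U.det * (1 + diagonal d).det * (star U).det := by
        rw [mul_comm U.det, mul_assoc, hdet, mul_one]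
    _ = (1 + Z).det := by rw [key, det_mul, det_mul]

lemma det_le_det_add {X Y : Matrix n n ℝ} (hX : X.PosSemidef) (hY : Y.PosSemidef) :
    X.det ≤ (X + Y).det := by
  rcases le_or_gt X.det 0 with h0 | h0
  · exact h0.trans (psd_det_nonneg (hX.add hY))
  · -- X posdef via sqrt
    open scoped MatrixOrder in set S := CFC.sqrt X with hS
    have hSps : S.PosSemidef := by open scoped MatrixOrder in exact (CFC.sqrt_nonneg X).posSemidef
    have hSsq : S * S = X := by
      open scoped MatrixOrder in have := CFC.sq_sqrt X hX.nonneg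
      rwa [pow_two] at this
    have hSdet : S.det ≠ 0 := by
      intro hz
      rw [← hSsq, det_mul, hz, mul_zero] at h0
      exact lt_irrefl _ h0
    have hSinv : S * S⁻¹ = 1 := Matrix.mul_nonsing_inv S (by simpa using hSdet)
    have hSinv' : S⁻¹ * S = 1 := Matrix.nonsing_inv_mul S (by simpa using hSdet)
    have hSinvH : (S⁻¹)ᴴ = S⁻¹ := hSps.inv.isHermitian
    set Z := S⁻¹ * Y * S⁻¹ with hZ
    have hZps : Z.PosSemidef := by
      have := hY.mul_mul_conjTranspose_same S⁻¹
      rwa [hSinvH] at this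
    have hy : S * (S⁻¹ * Y * S⁻¹) * S = Y := by
      calc S * (S⁻¹ * Y * S⁻¹) * S = S * S⁻¹ * (Y * (S⁻¹ * S)) := by
            simp only [Matrix.mul_assoc]
        _ = Y := by rw [hSinv, hSinv', Matrix.mul_one, Matrix.one_mul]
    have key : X + Y = S * (1 + Z) * S := by
      rw [Matrix.mul_add, Matrix.add_mul, Matrix.mul_one, hSsq, hZ, hy]
    have : X.det = S.det * 1 * S.det := by rw [mul_one, ← det_mul, hSsq]
    rw [this, key, det_mul, det_mul]
    have h1 : 1 ≤ (1 + Z).det := one_le_det_one_add hZps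
    have hS0 : 0 < S.det * S.det := by
      have : S.det * S.det = X.det := by rw [← det_mul, hSsq]
      linarith
    nlinarith

theorem cauchy_schwarz_det {ℓ m : ℕ} (hlm : ℓ ≤ m)
    (A B : Matrix (Fin m) (Fin ℓ) ℝ) :
    ((Aᵀ * B).det) ^ 2 ≤ (Aᵀ * A).det * (Bᵀ * B).det := by
  have hct : ∀ {a b : ℕ} (M : Matrix (Fin a) (Fin b) ℝ), Mᴴ = Mᵀ := fun M =>
    conjTranspose_eq_transpose_of_trivial M
  have hAps : (Aᵀ * A).PosSemidef := by
    have := posSemidef_conjTranspose_mul_self A; rwa [hct] at this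
  have hBps : (Bᵀ * B).PosSemidef := by
    have := posSemidef_conjTranspose_mul_self B; rwa [hct] at this
  by_cases h0 : (Aᵀ * A).det = 0
  · obtain ⟨v, hv, hvz⟩ := (Matrix.exists_mulVec_eq_zero_iff).mpr h0
    have hAv : A *ᵥ v = 0 := by
      have h1 : v ⬝ᵥ ((Aᵀ * A) *ᵥ v) = 0 := by rw [hvz, dotProduct_zero]
      rw [← mulVec_mulVec, dotProduct_mulVec, vecMul_transpose,
        dotProduct_self_eq_zero] at h1
      exact h1
    have hz : (Bᵀ * A) *ᵥ v = 0 := by rw [← mulVec_mulVec, hAv, mulVec_zero]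
    have hdet : (Aᵀ * B).det = 0 := by
      rw [← det_transpose, transpose_mul, transpose_transpose]
      exact Matrix.exists_mulVec_eq_zero_iff.mp ⟨v, hv, hz⟩
    rw [hdet, h0]
    simp
  · set G := Aᵀ * A with hG
    have hGH : Gᵀ = G := by rw [hG, transpose_mul, transpose_transpose]
    have hGinv : G * G⁻¹ = 1 := Matrix.mul_nonsing_inv G (by simpa using h0)
    have hGinv' : G⁻¹ * G = 1 := Matrix.nonsing_inv_mul G (by simpa using h0)
    have hGiH : (G⁻¹)ᵀ = G⁻¹ := by rw [Matrix.transpose_nonsing_inv, hGH]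
    set P := A * G⁻¹ * Aᵀ with hP
    have hPT : Pᵀ = P := by
      rw [hP, transpose_mul, transpose_mul, transpose_transpose, hGiH, Matrix.mul_assoc]
    have hPP : P * P = P := by
      rw [hP]
      calc A * G⁻¹ * Aᵀ * (A * G⁻¹ * Aᵀ)
          = A * G⁻¹ * (Aᵀ * A) * G⁻¹ * Aᵀ := by simp only [Matrix.mul_assoc]
        _ = A * (G⁻¹ * G) * G⁻¹ * Aᵀ := by rw [← hG]; simp only [Matrix.mul_assoc]
        _ = A * G⁻¹ * Aᵀ := by rw [hGinv', Matrix.mul_one]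
    have hPps : P.PosSemidef := by
      have hGi : (G⁻¹).PosSemidef := hAps.inv
      have := hGi.mul_mul_conjTranspose_same A
      rwa [hct] at this
    have hQps : (1 - P).PosSemidef := by
      have := posSemidef_conjTranspose_mul_self (1 - P)
      rw [hct, transpose_sub, transpose_one, hPT] at this
      have heq : (1 - P) * (1 - P) = 1 - P := by
        simp only [Matrix.mul_sub, Matrix.sub_mul, Matrix.mul_one, Matrix.one_mul, hPP]
        abel
      rwa [heq] at this
    have hXps : (Bᵀ * P * B).PosSemidef := by
      have := hPps.conjTranspose_mul_mul_same B
      rwa [hct] at this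
    have hYps : (Bᵀ * (1 - P) * B).PosSemidef := by
      have := hQps.conjTranspose_mul_mul_same B
      rwa [hct] at this
    have hsum : Bᵀ * P * B + Bᵀ * (1 - P) * B = Bᵀ * B := by
      rw [← Matrix.add_mul, ← Matrix.mul_add, add_sub_cancel, Matrix.mul_one]
    have hXdet : (Bᵀ * P * B).det * G.det = (Aᵀ * B).det ^ 2 := by
      have hassoc : Bᵀ * P * B = (Bᵀ * A) * G⁻¹ * (Aᵀ * B) := by
        rw [hP]; simp only [Matrix.mul_assoc]
      have hBA : (Bᵀ * A).det = (Aᵀ * B).det := by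
        rw [← det_transpose (Bᵀ * A), transpose_mul, transpose_transpose]
      rw [hassoc, det_mul, det_mul, hBA, Matrix.det_nonsing_inv, Ring.inverse_eq_inv]
      field_simp
    have hGnn : 0 ≤ G.det := psd_det_nonneg hAps
    have hle : (Bᵀ * P * B).det ≤ (Bᵀ * B).det := by
      have := det_le_det_add hXps hYps
      rwa [hsum] at this
    calc (Aᵀ * B).det ^ 2 = (Bᵀ * P * B).det * G.det := hXdet.symm
      _ ≤ (Bᵀ * B).det * G.det := by
          exact mul_le_mul_of_nonneg_right hle hGnn
      _ = G.det * (Bᵀ * B).det := mul_comm _ _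
end

section
/- Let ℓ ≤ m, let H ∈ ℝ^{ℓ×m}, and suppose Q ∈ ℝ^{m×ℓ} satisfies HQ = S with S lower triangular and every column of Q has Euclidean norm at most 1. Then (det S)² ≤ det(H Hᵀ). -/
open Matrix

theorem det_sq_le_det_HHt {ℓ m : ℕ} (hlm : ℓ ≤ m)
    (H : Matrix (Fin ℓ) (Fin m) ℝ) (Q : Matrix (Fin m) (Fin ℓ) ℝ)
    (S : Matrix (Fin ℓ) (Fin ℓ) ℝ)
    (hlow : ∀ i j, i < j → S i j = 0)
    (hHQ : H * Q = S)
    (hQ : ∀ j, ∑ i, (Q i j) ^ 2 ≤ 1) :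
    (S.det) ^ 2 ≤ (H * Hᵀ).det := by
  by_cases hker : ∃ v : Fin ℓ → ℝ, v ≠ 0 ∧ v ᵥ* H = 0
  · obtain ⟨v, hv, hvH⟩ := hker
    have hS : S.det = 0 := by
      rw [← Matrix.exists_vecMul_eq_zero_iff]
      exact ⟨v, hv, by rw [← hHQ, ← Matrix.vecMul_vecMul, hvH, Matrix.zero_vecMul]⟩
    have hA : (H * Hᵀ).det = 0 := by
      rw [← Matrix.exists_vecMul_eq_zero_iff]
      exact ⟨v, hv, by rw [← Matrix.vecMul_vecMul, hvH, Matrix.zero_vecMul]⟩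
    simp [hS, hA]
  · push_neg at hker
    have htr : Hᴴ = Hᵀ := by
      ext i j; simp [Matrix.conjTranspose_apply]
    have hA : (H * Hᵀ).PosDef := by
      rw [Matrix.posDef_iff_dotProduct_mulVec]; constructor
      · rw [← htr]; exact Matrix.isHermitian_mul_conjTranspose_self H
      · intro x hx
        have hw : x ᵥ* H ≠ 0 := hker x hx
        have : dotProduct (star x) ((H * Hᵀ) *ᵥ x)
            = dotProduct (x ᵥ* H) (x ᵥ* H) := by
          rw [← Matrix.mulVec_mulVec, Matrix.mulVec_transpose, star_trivial,
            Matrix.dotProduct_mulVec]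
        rw [this]
        refine lt_of_le_of_ne (Finset.sum_nonneg fun i _ => mul_self_nonneg _) ?_
        exact fun h => hw (dotProduct_self_eq_zero.mp h.symm)
    haveI : WellFoundedLT (Fin ℓ) := inferInstance
    have hinst : (fun a b => LinearOrder.toDecidableEq a b : DecidableEq (Fin ℓ))
        = instDecidableEqFin ℓ := Subsingleton.elim _ _
    set N := LDL.lowerInv hA with hNdef
    have hNct : Nᴴ = Nᵀ := by ext i j; simp [Matrix.conjTranspose_apply]
    have hD : LDL.diag hA = N * (H * Hᵀ) * Nᵀ := by
      rw [← hNct]; exact LDL.diag_eq_lowerInv_conj hA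
    set B := N * H with hBdef
    have hBB : B * Bᵀ = LDL.diag hA := by
      rw [hD, hBdef, Matrix.transpose_mul]
      simp [Matrix.mul_assoc]
    have hdiagB : ∀ i, ∑ k, (B i k) ^ 2 = LDL.diagEntries hA i := by
      intro i
      have h1 : (B * Bᵀ) i i = LDL.diagEntries hA i := by
        rw [hBB]; simp [LDL.diag, Matrix.diagonal]
      rw [← h1, Matrix.mul_apply]
      congr 1; ext k; rw [Matrix.transpose_apply]; ring
    have hdiagnn : ∀ i, 0 ≤ LDL.diagEntries hA i := by
      intro i; rw [← hdiagB i]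
      exact Finset.sum_nonneg fun k _ => sq_nonneg _
    set T := N * S with hTdef
    have hTtri : T.BlockTriangular OrderDual.toDual := by
      intro i j hij
      have hij' : (i : Fin ℓ) < j := hij
      rw [hTdef, Matrix.mul_apply]
      refine Finset.sum_eq_zero fun k _ => ?_
      rcases le_or_gt k i with hk | hk
      · rw [hlow k j (lt_of_le_of_lt hk hij'), mul_zero]
      · rw [hNdef, LDL.lowerInv_triangular hA hk, zero_mul]
    have hdetT : T.det = ∏ i, T i i := Matrix.det_of_lowerTriangular T hTtri
    have hTBQ : T = B * Q := by rw [hTdef, hBdef, ← hHQ, Matrix.mul_assoc]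
    have hTii : ∀ i, (T i i) ^ 2 ≤ LDL.diagEntries hA i := by
      intro i
      have h1 : T i i = ∑ k, B i k * Q k i := by rw [hTBQ, Matrix.mul_apply]
      calc (T i i) ^ 2 = (∑ k, B i k * Q k i) ^ 2 := by rw [h1]
        _ ≤ (∑ k, (B i k) ^ 2) * (∑ k, (Q k i) ^ 2) :=
            Finset.sum_mul_sq_le_sq_mul_sq _ _ _
        _ ≤ (∑ k, (B i k) ^ 2) * 1 := by
            refine mul_le_mul_of_nonneg_left (hQ i) ?_
            exact Finset.sum_nonneg fun k _ => sq_nonneg _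
        _ = LDL.diagEntries hA i := by rw [mul_one, hdiagB i]
    have hNdet : N.det ≠ 0 := by
      have h := (@Matrix.isUnit_det_of_invertible (Fin ℓ) ℝ _
        (fun a b => LinearOrder.toDecidableEq a b) _
        (LDL.lowerInv hA) (LDL.invertibleLowerInv hA)).ne_zero
      rw [hNdef, ← hinst]
      exact h
    have hkey : N.det ^ 2 * S.det ^ 2 ≤ N.det ^ 2 * (H * Hᵀ).det := by
      have h1 : N.det ^ 2 * S.det ^ 2 = (∏ i, T i i) ^ 2 := by
        rw [← hdetT, hTdef, Matrix.det_mul]; ring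
      have h2 : N.det ^ 2 * (H * Hᵀ).det = ∏ i, LDL.diagEntries hA i := by
        have htri : (LDL.diag hA).BlockTriangular OrderDual.toDual := by
          intro i j hij
          have hij' : (i : Fin ℓ) < j := hij
          unfold LDL.diag
          rw [hinst]
          exact Matrix.diagonal_apply_ne _ (ne_of_lt hij')
        have : (LDL.diag hA).det = ∏ i, LDL.diagEntries hA i := by
          rw [Matrix.det_of_lowerTriangular _ htri]
          refine Finset.prod_congr rfl fun i _ => ?_
          unfold LDL.diag
          rw [hinst]
          exact Matrix.diagonal_apply_eq _ i
        rw [← this, hD, Matrix.det_mul, Matrix.det_mul, Matrix.det_transpose]; ring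
      rw [h1, h2, ← Finset.prod_pow]
      exact Finset.prod_le_prod (fun i _ => sq_nonneg _) fun i _ => hTii i
    have hpos : 0 < N.det ^ 2 := by positivity
    exact le_of_mul_le_mul_left hkey hpos
end

section
/- (Upper-bound half of the geometric-mean SOCP, general ℓ even) With notation as in the geometric-mean SOCP problem (ℓ even, g ≥ 0, p = ⌈log₂ ℓ⌉), any nonnegative reals u₁,…,u_{2^p−1} satisfying all constraints obey u₁^{2^p} ≤ ∏_{i=2^{p−1}}^{2^p−1} uᵢ², and ∏_{i=2^{p−1}}^{2^p−1} uᵢ² ≤ (∏_{j=1}^{ℓ} gⱼ) · u₁^{2^p−ℓ}; combining these gives u₁^ℓ ≤ ∏ⱼ gⱼ. -/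
lemma prod_double_aux (f : ℕ → ℝ) (a n : ℕ) :
    ∏ i ∈ Finset.Ico a (a + n), (f (2*i) * f (2*i+1))
      = ∏ j ∈ Finset.Ico (2*a) (2*a + 2*n), f j := by
  induction n with
  | zero => simp
  | succ n ih =>
    rw [show a + (n+1) = (a+n) + 1 by ring, Finset.prod_Ico_succ_top (by omega),
        show 2*a + 2*(n+1) = (2*a + 2*n) + 1 + 1 by ring,
        Finset.prod_Ico_succ_top (by omega), Finset.prod_Ico_succ_top (by omega), ih,
        Nat.mul_add 2 a n, mul_assoc]

theorem geometric_mean_socp_upper_bound (ℓ p : ℕ) (hℓ : 0 < ℓ) (heven : Even ℓ)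
    (hp1 : 2 ^ (p - 1) < ℓ) (hp2 : ℓ ≤ 2 ^ p)
    (g : ℕ → ℝ) (hg : ∀ j, 1 ≤ j → j ≤ ℓ → 0 ≤ g j)
    (u : ℕ → ℝ)
    (hu0 : ∀ i, 1 ≤ i → i ≤ 2 ^ p - 1 → 0 ≤ u i)
    (hu1 : ∀ i, 1 ≤ i → i ≤ 2 ^ (p - 1) - 1 →
      (u i) ^ 2 ≤ u (2 * i) * u (2 * i + 1))
    (hu2 : ∀ i, 2 ^ (p - 1) ≤ i → i ≤ 2 ^ (p - 1) + ℓ / 2 - 1 →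
      (u i) ^ 2 ≤ g (2 * i - 2 ^ p + 1) * g (2 * i - 2 ^ p + 2))
    (hu3 : ∀ i, 2 ^ (p - 1) + ℓ / 2 ≤ i → i ≤ 2 ^ p - 1 → u i ≤ u 1) :
    u 1 ^ (2 ^ p) ≤ ∏ i ∈ Finset.Icc (2 ^ (p - 1)) (2 ^ p - 1), (u i) ^ 2
    ∧ ∏ i ∈ Finset.Icc (2 ^ (p - 1)) (2 ^ p - 1), (u i) ^ 2
        ≤ (∏ j ∈ Finset.Icc 1 ℓ, g j) * u 1 ^ (2 ^ p - ℓ)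
    ∧ u 1 ^ ℓ ≤ ∏ j ∈ Finset.Icc 1 ℓ, g j := by
  -- basic facts
  have hp : 1 ≤ p := by
    rcases Nat.eq_zero_or_pos p with h | h
    · subst h; simp at hp1 hp2; omega
    · exact h
  obtain ⟨m, hm⟩ := heven
  have hm2 : ℓ = 2 * m := by omega
  have hmdiv : ℓ / 2 = m := by omega
  set q : ℕ := 2 ^ (p - 1) with hq
  have h2p : 2 ^ p = 2 * q := by
    rw [hq, ← pow_succ']
    congr 1
    omega
  have hq1 : 1 ≤ q := Nat.one_le_two_pow
  have hmq : m ≤ q := by omega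
  have hm1 : 1 ≤ m := by omega
  have hu1nn : 0 ≤ u 1 := hu0 1 le_rfl (by omega)
  -- the level-by-level lemma
  have key : ∀ k, k + 1 ≤ p →
      u 1 ^ (2 ^ (k+1)) ≤ ∏ i ∈ Finset.Ico (2 ^ k) (2 ^ (k+1)), (u i) ^ 2 := by
    intro k
    induction k with
    | zero =>
      intro _
      norm_num [Finset.prod_Ico_eq_prod_range]
    | succ n ih =>
      intro hnp
      have hIH := ih (by omega)
      have h1 : u 1 ^ 2 ^ (n + 1 + 1) = (u 1 ^ 2 ^ (n+1)) ^ 2 := by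
        rw [← pow_mul, pow_succ]
      rw [h1]
      have h2 : (u 1 ^ 2 ^ (n+1)) ^ 2 ≤ (∏ i ∈ Finset.Ico (2 ^ n) (2 ^ (n+1)), (u i) ^ 2) ^ 2 :=
        pow_le_pow_left₀ (pow_nonneg hu1nn _) hIH 2
      refine h2.trans ?_
      rw [← Finset.prod_pow]
      have hub : 2 ^ (n+1) ≤ 2 ^ (p-1) := Nat.pow_le_pow_right (by norm_num) (by omega)
      have step : ∏ i ∈ Finset.Ico (2 ^ n) (2 ^ (n+1)), ((u i) ^ 2) ^ 2
          ≤ ∏ i ∈ Finset.Ico (2 ^ n) (2 ^ (n+1)), ((u (2*i))^2 * (u (2*i+1))^2) := by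
        apply Finset.prod_le_prod
        · intro i _; positivity
        · intro i hi
          rw [Finset.mem_Ico] at hi
          have h1i : 1 ≤ i := le_trans Nat.one_le_two_pow hi.1
          have hile : i ≤ 2 ^ (p-1) - 1 := by omega
          have := hu1 i h1i hile
          calc ((u i)^2)^2 ≤ (u (2*i) * u (2*i+1))^2 := by
                apply pow_le_pow_left₀ (sq_nonneg _) this
            _ = (u (2*i))^2 * (u (2*i+1))^2 := by ring
      refine step.trans ?_
      have hrw : Finset.Ico (2^n) (2^(n+1)) = Finset.Ico (2^n) (2^n + 2^n) := by
        congr 1; rw [pow_succ]; ring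
      rw [hrw, prod_double_aux (fun j => (u j)^2) (2^n) (2^n)]
      apply le_of_eq
      congr 1 <;> rw [pow_succ] <;> ring
  -- Part 1
  have hIccIco : Finset.Icc q (2 ^ p - 1) = Finset.Ico q (2 ^ p) := by
    rw [← Finset.Ico_add_one_right_eq_Icc]
    congr 1
    omega
  have part1 : u 1 ^ (2 ^ p) ≤ ∏ i ∈ Finset.Icc q (2 ^ p - 1), (u i) ^ 2 := by
    rw [hIccIco]
    have := key (p - 1) (by omega)
    have hpe : p - 1 + 1 = p := by omega
    rw [hpe] at this
    exact this
  -- Part 2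
  have hsplit : Finset.Ico q (2 * q) = Finset.Ico q (q + m) ∪ Finset.Ico (q + m) (2 * q) := by
    rw [Finset.Ico_union_Ico_eq_Ico (by omega) (by omega)]
  have hprodsplit : ∏ i ∈ Finset.Ico q (2 * q), (u i) ^ 2
      = (∏ i ∈ Finset.Ico q (q + m), (u i) ^ 2) * ∏ i ∈ Finset.Ico (q + m) (2 * q), (u i) ^ 2 := by
    rw [← Finset.prod_Ico_consecutive _ (by omega : q ≤ q + m) (by omega : q + m ≤ 2 * q)]
  -- first half bound
  have hfirst : ∏ i ∈ Finset.Ico q (q + m), (u i) ^ 2 ≤ ∏ j ∈ Finset.Icc 1 ℓ, g j := by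
    have hstep : ∏ i ∈ Finset.Ico q (q + m), (u i) ^ 2
        ≤ ∏ i ∈ Finset.Ico q (q + m), ((fun j => g (j - 2 ^ p + 1)) (2*i) * (fun j => g (j - 2 ^ p + 1)) (2*i+1)) := by
      apply Finset.prod_le_prod
      · intro i _; positivity
      · intro i hi
        rw [Finset.mem_Ico] at hi
        have h := hu2 i (by omega) (by omega)
        have e1 : 2 * i - 2 ^ p + 1 = (2*i) - 2 ^ p + 1 := rfl
        have e2 : (2*i+1) - 2 ^ p + 1 = 2 * i - 2 ^ p + 2 := by
          have : 2 ^ p ≤ 2 * i := by omega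
          omega
        simpa [e2] using h
    refine hstep.trans ?_
    rw [prod_double_aux (fun j => g (j - 2 ^ p + 1)) q m]
    apply le_of_eq
    rw [Finset.prod_Ico_eq_prod_range, ← Finset.Ico_add_one_right_eq_Icc, Finset.prod_Ico_eq_prod_range]
    have hc1 : 2 * q + 2 * m - 2 * q = ℓ := by omega
    have hc2 : ℓ + 1 - 1 = ℓ := by omega
    rw [hc1, hc2]
    apply Finset.prod_congr rfl
    intro k hk
    congr 1
    omega
  -- second half bound
  have hsecond : ∏ i ∈ Finset.Ico (q + m) (2 * q), (u i) ^ 2 ≤ u 1 ^ (2 ^ p - ℓ) := by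
    have hstep : ∏ i ∈ Finset.Ico (q + m) (2 * q), (u i) ^ 2
        ≤ ∏ i ∈ Finset.Ico (q + m) (2 * q), (u 1) ^ 2 := by
      apply Finset.prod_le_prod
      · intro i _; positivity
      · intro i hi
        rw [Finset.mem_Ico] at hi
        have h3 := hu3 i (by omega) (by omega)
        have h0 := hu0 i (by omega) (by omega)
        exact pow_le_pow_left₀ h0 h3 2
    refine hstep.trans ?_
    rw [Finset.prod_const, Nat.card_Ico, ← pow_mul]
    apply le_of_eq
    congr 1
    omega
  have hGnn : 0 ≤ ∏ j ∈ Finset.Icc 1 ℓ, g j := by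
    apply Finset.prod_nonneg
    intro j hj
    rw [Finset.mem_Icc] at hj
    exact hg j hj.1 hj.2
  have part2 : ∏ i ∈ Finset.Icc q (2 ^ p - 1), (u i) ^ 2
      ≤ (∏ j ∈ Finset.Icc 1 ℓ, g j) * u 1 ^ (2 ^ p - ℓ) := by
    have heq : ∏ i ∈ Finset.Icc q (2 ^ p - 1), (u i) ^ 2
        = (∏ i ∈ Finset.Ico q (q + m), (u i) ^ 2) * ∏ i ∈ Finset.Ico (q + m) (2 * q), (u i) ^ 2 := by
      rw [hIccIco, h2p, hprodsplit]
    rw [heq]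
    exact mul_le_mul hfirst hsecond (Finset.prod_nonneg (by intro i _; positivity)) hGnn
  refine ⟨part1, part2, ?_⟩
  -- Part 3
  have hchain : u 1 ^ ℓ * u 1 ^ (2 ^ p - ℓ) ≤ (∏ j ∈ Finset.Icc 1 ℓ, g j) * u 1 ^ (2 ^ p - ℓ) := by
    rw [← pow_add]
    have : ℓ + (2 ^ p - ℓ) = 2 ^ p := by omega
    rw [this]
    exact part1.trans part2
  rcases eq_or_lt_of_le hu1nn with h0 | h0
  · have : u 1 ^ ℓ = 0 := by rw [← h0]; exact zero_pow (by omega)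
    rw [this]; exact hGnn
  · exact le_of_mul_le_mul_right hchain (pow_pos h0 _)
end

section
/- Let K be a reproducing kernel for a real Hilbert space H of functions on Ω, let x₁,…,xₙ ∈ Ω be points with invertible kernel matrix 𝒦, and let u(x) = 𝒦⁻¹k(x) be the cardinal basis vector. Then for every f ∈ H and x ∈ Ω, |f(x) − ∑ⱼ f(xⱼ)uⱼ(x)| ≤ ‖f‖_H · √(K(x,x) − k(x)ᵀ𝒦⁻¹k(x)). -/
open Matrix

theorem kernel_interp_error_bound {Ω : Type*} {n : ℕ}
    {H : Type*} [NormedAddCommGroup H] [InnerProductSpace ℝ H]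
    (K : Ω → Ω → ℝ) (Φ : Ω → H)
    (hrepr : ∀ x y, K x y = inner ℝ (Φ x) (Φ y))
    (xs : Fin n → Ω)
    (hK : IsUnit (Matrix.of fun i j => K (xs i) (xs j)).det)
    (f : H) (x : Ω) :
    |(inner ℝ f (Φ x) : ℝ) -
        ∑ j, ((Matrix.of fun i j => K (xs i) (xs j))⁻¹ *ᵥ
            (fun i => K x (xs i))) j * (inner ℝ f (Φ (xs j)) : ℝ)|
      ≤ ‖f‖ * Real.sqrt (K x x - (fun i => K x (xs i)) ⬝ᵥ
          ((Matrix.of fun i j => K (xs i) (xs j))⁻¹ *ᵥ (fun i => K x (xs i)))) := by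
  set A : Matrix (Fin n) (Fin n) ℝ := Matrix.of fun i j => K (xs i) (xs j) with hA
  set u : Fin n → ℝ := A⁻¹ *ᵥ (fun i => K x (xs i)) with hu
  set v : H := Φ x - ∑ j, u j • Φ (xs j) with hv
  have hAu : A *ᵥ u = fun i => K x (xs i) := by
    rw [hu, Matrix.mulVec_mulVec, Matrix.mul_nonsing_inv _ hK, Matrix.one_mulVec]
  have hAu' : ∀ i, ∑ j, A i j * u j = K x (xs i) := fun i => congrFun hAu i
  have h1 : (inner ℝ f (Φ x) : ℝ) - ∑ j, u j * (inner ℝ f (Φ (xs j)) : ℝ)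
      = inner ℝ f v := by
    rw [hv, inner_sub_right, inner_sum]
    simp [real_inner_smul_right]
  have hS : ∀ w : H, (inner ℝ (∑ j, u j • Φ (xs j)) w : ℝ)
      = ∑ j, u j * inner ℝ (Φ (xs j)) w := by
    intro w
    rw [sum_inner]
    simp [real_inner_smul_left]
  have hsym : ∀ i, K (xs i) x = K x (xs i) := fun i => by
    rw [hrepr, hrepr, real_inner_comm]
  have hnormsq : ‖v‖ ^ 2 = K x x - (fun i => K x (xs i)) ⬝ᵥ u := by
    rw [← real_inner_self_eq_norm_sq]
    rw [hv, inner_sub_left, inner_sub_right, hS]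
    simp only [inner_sub_right, mul_sub, Finset.sum_sub_distrib]
    have hterm1 : (inner ℝ (Φ x) (Φ x) : ℝ) = K x x := (hrepr x x).symm
    have hterm2 : (inner ℝ (Φ x) (∑ j, u j • Φ (xs j)) : ℝ)
        = (fun i => K x (xs i)) ⬝ᵥ u := by
      rw [inner_sum]
      simp only [real_inner_smul_right, dotProduct]
      exact Finset.sum_congr rfl fun j _ => by rw [← hrepr, mul_comm]
    have hterm3 : ∑ j, u j * (inner ℝ (Φ (xs j)) (Φ x) : ℝ)
        = (fun i => K x (xs i)) ⬝ᵥ u := by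
      simp only [dotProduct]
      exact Finset.sum_congr rfl fun j _ => by
        rw [← hrepr, hsym, mul_comm]
    have hterm4 : ∑ j, u j * (inner ℝ (Φ (xs j)) (∑ i, u i • Φ (xs i)) : ℝ)
        = (fun i => K x (xs i)) ⬝ᵥ u := by
      simp only [dotProduct]
      refine Finset.sum_congr rfl fun j _ => ?_
      rw [inner_sum]
      simp only [real_inner_smul_right]
      have : ∑ i, u i * (inner ℝ (Φ (xs j)) (Φ (xs i)) : ℝ) = ∑ i, A j i * u i := by
        exact Finset.sum_congr rfl fun i _ => by
          rw [← hrepr]; simp [hA, mul_comm]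
      rw [this, hAu' j, mul_comm]
    rw [hterm1, hterm2, hterm3, hterm4]
    ring
  have hsqrt : Real.sqrt (K x x - (fun i => K x (xs i)) ⬝ᵥ u) = ‖v‖ := by
    rw [← hnormsq, Real.sqrt_sq (norm_nonneg v)]
  rw [h1, hsqrt]
  exact abs_real_inner_le_norm f v
end
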